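/- Let α be a nonnegative random variable with finite expectation and continuous CDF F which is DMRL (its mean residual lifetime m is non-increasing), let T ≥ 0, c ≥ 0, k = 3T + c, r_H = α_H − k, and assume r_H > 0. Then the fixed point equation r = m(k + r) has a unique solution r* in (0, r_H), and r* is the unique global maximizer over [0,∞) of the supplier's expected payoff U(r) = (2/3)·r·E[(α − k − r)⁺]. -/

import Mathlib

open MeasureTheory Set

/-- The cumulative distribution function of a distribution `μ` on `ℝ`. -/
noncomputable def cdfR (μ : Measure ℝ) (t : ℝ) : ℝ := (μ (Iic t)).toReal

/-- The mean residual lifetime function `m(t) = E[α − t ∣ α > t]` (with value `0` when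
`P(α > t) = 0`, using the junk-value convention `x / 0 = 0`). -/
noncomputable def mrl (μ : Measure ℝ) (t : ℝ) : ℝ :=
  (∫ x, max (x - t) 0 ∂μ) / (μ (Ioi t)).toReal

namespace Stmt10

/-- Survival function. -/
noncomputable def SS (μ : Measure ℝ) (t : ℝ) : ℝ := (μ (Ioi t)).toReal

/-- Stop-loss transform. -/
noncomputable def gg (μ : Measure ℝ) (t : ℝ) : ℝ := ∫ x, max (x - t) 0 ∂μ

variable {μ : Measure ℝ}

lemma mrl_eq (t : ℝ) : mrl μ t = gg μ t / SS μ t := rfl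

lemma integrable_max [IsProbabilityMeasure μ] (hint : Integrable id μ) (t : ℝ) :
    Integrable (fun x => max (x - t) 0) μ :=
  (hint.sub (integrable_const t)).pos_part

lemma SS_nonneg (t : ℝ) : 0 ≤ SS μ t := ENNReal.toReal_nonneg

lemma SS_le_one [IsProbabilityMeasure μ] (t : ℝ) : SS μ t ≤ 1 := by
  rw [SS]
  exact ENNReal.toReal_le_of_le_ofReal zero_le_one (by simpa using prob_le_one (μ := μ))

lemma SS_antitone [IsProbabilityMeasure μ] : Antitone (SS μ) := by
  intro a b hab
  exact ENNReal.toReal_mono (measure_ne_top μ _) (measure_mono (Ioi_subset_Ioi hab))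

lemma SS_pos [IsProbabilityMeasure μ] {t : ℝ} (h : μ (Ioi t) ≠ 0) : 0 < SS μ t :=
  ENNReal.toReal_pos h (measure_ne_top μ _)

lemma SS_split [IsProbabilityMeasure μ] {t1 t2 : ℝ} (h : t1 ≤ t2) :
    SS μ t1 = (μ (Ioc t1 t2)).toReal + SS μ t2 := by
  rw [SS, SS, ← Ioc_union_Ioi_eq_Ioi h,
    measure_union (Ioc_disjoint_Ioi le_rfl) measurableSet_Ioi,
    ENNReal.toReal_add (measure_ne_top μ _) (measure_ne_top μ _)]

lemma gg_diff [IsProbabilityMeasure μ] (hint : Integrable id μ) {t1 t2 : ℝ} (h : t1 ≤ t2) :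
    gg μ t1 - gg μ t2 = (∫ x in Ioc t1 t2, (x - t1) ∂μ) + (t2 - t1) * SS μ t2 := by
  have key : ∀ x : ℝ, max (x - t1) 0 - max (x - t2) 0 =
      (Ioc t1 t2).indicator (fun x => x - t1) x + (Ioi t2).indicator (fun _ => t2 - t1) x := by
    intro x
    rcases le_or_gt x t1 with h1 | h1
    · rw [indicator_of_notMem (by simp [mem_Ioc]; intro hx; linarith),
        indicator_of_notMem (by simp [mem_Ioi]; linarith)]
      rw [max_eq_right (by linarith), max_eq_right (by linarith)]
      ring
    · rcases le_or_gt x t2 with h2 | h2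
      · rw [indicator_of_mem (by simp [mem_Ioc]; exact ⟨h1, h2⟩),
          indicator_of_notMem (by simp [mem_Ioi]; linarith)]
        rw [max_eq_left (by linarith), max_eq_right (by linarith)]
        ring
      · rw [indicator_of_notMem (by simp [mem_Ioc]; intro hx; linarith),
          indicator_of_mem (by simp [mem_Ioi]; linarith)]
        rw [max_eq_left (by linarith), max_eq_left (by linarith)]
        ring
  have h1 : Integrable ((Ioc t1 t2).indicator (fun x => x - t1)) μ :=
    (hint.sub (integrable_const t1)).indicator measurableSet_Ioc
  have h2 : Integrable ((Ioi t2).indicator (fun _ : ℝ => t2 - t1)) μ :=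
    (integrable_const (t2 - t1)).indicator measurableSet_Ioi
  calc gg μ t1 - gg μ t2 = ∫ x, (max (x - t1) 0 - max (x - t2) 0) ∂μ :=
        (integral_sub (integrable_max hint t1) (integrable_max hint t2)).symm
    _ = ∫ x, ((Ioc t1 t2).indicator (fun x => x - t1) x
          + (Ioi t2).indicator (fun _ => t2 - t1) x) ∂μ := by simp_rw [key]
    _ = (∫ x, (Ioc t1 t2).indicator (fun x => x - t1) x ∂μ)
          + ∫ x, (Ioi t2).indicator (fun _ => t2 - t1) x ∂μ := integral_add h1 h2
    _ = (∫ x in Ioc t1 t2, (x - t1) ∂μ) + (t2 - t1) * SS μ t2 := by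
        rw [integral_indicator measurableSet_Ioc, integral_indicator measurableSet_Ioi,
          setIntegral_const, smul_eq_mul, SS, mul_comm]
        rfl

lemma I_nonneg (t1 t2 : ℝ) : 0 ≤ ∫ x in Ioc t1 t2, (x - t1) ∂μ :=
  setIntegral_nonneg measurableSet_Ioc (fun x hx => by
    simp only [mem_Ioc] at hx; linarith [hx.1])

lemma I_le [IsProbabilityMeasure μ] (hint : Integrable id μ) {t1 t2 : ℝ} :
    ∫ x in Ioc t1 t2, (x - t1) ∂μ ≤ (t2 - t1) * (μ (Ioc t1 t2)).toReal := by
  have hi1 : Integrable (fun x : ℝ => x - t1) μ :=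
    (hint.sub (integrable_const t1)).congr (ae_of_all _ fun x => rfl)
  have := setIntegral_mono_on (μ := μ) (s := Ioc t1 t2) (f := fun x => x - t1)
    (g := fun _ => t2 - t1) hi1.integrableOn
    (integrable_const _).integrableOn measurableSet_Ioc
    (fun x hx => by simp only [mem_Ioc] at hx; show x - t1 ≤ t2 - t1; linarith [hx.2])
  rwa [setIntegral_const, smul_eq_mul, mul_comm] at this

lemma I_pos [IsProbabilityMeasure μ] (hint : Integrable id μ) {t1 t2 : ℝ}
    (hm : μ (Ioc t1 t2) ≠ 0) : 0 < ∫ x in Ioc t1 t2, (x - t1) ∂μ := by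
  have hi1 : Integrable (fun x : ℝ => x - t1) μ :=
    (hint.sub (integrable_const t1)).congr (ae_of_all _ fun x => rfl)
  rw [setIntegral_pos_iff_support_of_nonneg_ae ?_ hi1.integrableOn]
  · refine lt_of_lt_of_le (pos_iff_ne_zero.2 hm) (measure_mono ?_)
    intro x hx
    simp only [mem_Ioc] at hx
    refine ⟨?_, hx⟩
    simp only [Function.mem_support]
    intro h0
    have hx1 : x = t1 := by linarith [sub_eq_zero.1 h0]
    linarith [hx.1]
  · rw [Filter.EventuallyLE, ae_restrict_iff' measurableSet_Ioc]
    exact ae_of_all _ (fun x hx => by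
      simp only [mem_Ioc] at hx; simp only [Pi.zero_apply]; linarith [hx.1])

lemma I_lt [IsProbabilityMeasure μ] [NullSingletonClass μ] (hint : Integrable id μ) {t1 t2 : ℝ}
    (hm : μ (Ioc t1 t2) ≠ 0) :
    ∫ x in Ioc t1 t2, (x - t1) ∂μ < (t2 - t1) * (μ (Ioc t1 t2)).toReal := by
  have hi1 : Integrable (fun x : ℝ => x - t1) μ :=
    (hint.sub (integrable_const t1)).congr (ae_of_all _ fun x => rfl)
  have hi2 : Integrable (fun x : ℝ => t2 - x) μ :=
    ((integrable_const t2).sub hint).congr (ae_of_all _ fun x => rfl)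
  have hJ : 0 < ∫ x in Ioc t1 t2, (t2 - x) ∂μ := by
    rw [setIntegral_pos_iff_support_of_nonneg_ae ?_ hi2.integrableOn]
    · refine lt_of_lt_of_le ?_ (measure_mono (show Ioo t1 t2 ⊆ _ from ?_))
      · rw [measure_congr (Ioo_ae_eq_Ioc (μ := μ) (a := t1) (b := t2))]
        exact pos_iff_ne_zero.2 hm
      · intro x hx
        simp only [mem_Ioo] at hx
        refine ⟨?_, ⟨hx.1, hx.2.le⟩⟩
        simp only [Function.mem_support]
        intro h0
        have hx2 : t2 = x := by linarith [sub_eq_zero.1 h0]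
        linarith [hx.2]
    · rw [Filter.EventuallyLE, ae_restrict_iff' measurableSet_Ioc]
      exact ae_of_all _ (fun x hx => by
        simp only [mem_Ioc] at hx; simp only [Pi.zero_apply]; linarith [hx.2])
  have hsub : ∫ x in Ioc t1 t2, (t2 - x) ∂μ
      = (t2 - t1) * (μ (Ioc t1 t2)).toReal - ∫ x in Ioc t1 t2, (x - t1) ∂μ := by
    have heq : ∫ x in Ioc t1 t2, (t2 - x) ∂μ
        = ∫ x in Ioc t1 t2, ((t2 - t1) - (x - t1)) ∂μ := by
      congr 1; ext x; ring
    rw [heq, integral_sub (integrable_const _).integrableOn hi1.integrableOn,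
      setIntegral_const, smul_eq_mul, mul_comm]
    rfl
  linarith

lemma continuous_SS [IsProbabilityMeasure μ] (hcont : ∀ t : ℝ, μ {t} = 0) :
    Continuous (SS μ) := by
  rw [continuous_iff_continuousAt]
  intro a
  rw [Metric.continuousAt_iff]
  intro ε hε
  have hmono : Antitone (fun n : ℕ => Ioc (a - 1/(n+1)) (a + 1/(n+1)) : ℕ → Set ℝ) := by
    intro n m hnm
    have h1 : (1:ℝ)/(m+1) ≤ 1/(n+1) := by
      apply one_div_le_one_div_of_le (by positivity)
      exact_mod_cast Nat.succ_le_succ hnm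
    exact Ioc_subset_Ioc (by linarith) (by linarith)
  have hiInter : (⋂ n : ℕ, Ioc (a - 1/(n+1)) (a + 1/(n+1))) = {a} := by
    ext x
    simp only [mem_iInter, mem_Ioc, mem_singleton_iff]
    constructor
    · intro hmem
      by_contra hxa
      rcases lt_or_gt_of_ne hxa with hlt | hgt
      · obtain ⟨n, hn⟩ := exists_nat_one_div_lt (show (0:ℝ) < a - x by linarith)
        have := (hmem n).1
        push_cast at hn this
        linarith
      · obtain ⟨n, hn⟩ := exists_nat_one_div_lt (show (0:ℝ) < x - a by linarith)
        have := (hmem n).2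
        push_cast at hn this
        linarith
    · rintro rfl n
      have : (0:ℝ) < 1/(n+1) := by positivity
      exact ⟨by linarith, by linarith⟩
  have htend : Filter.Tendsto (fun n : ℕ => (μ (Ioc (a - 1/(n+1)) (a + 1/(n+1)))).toReal)
      Filter.atTop (nhds 0) := by
    have h0 : Filter.Tendsto (fun n : ℕ => μ (Ioc (a - 1/(n+1)) (a + 1/(n+1))))
        Filter.atTop (nhds 0) := by
      have := tendsto_measure_iInter_atTop (μ := μ)
        (s := fun n : ℕ => Ioc (a - 1/(n+1)) (a + 1/(n+1)))
        (fun n => measurableSet_Ioc.nullMeasurableSet) hmono ⟨0, measure_ne_top μ _⟩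
      rwa [hiInter, hcont a] at this
    have := (ENNReal.tendsto_toReal (by simp : (0:ENNReal) ≠ ⊤)).comp h0
    simpa [Function.comp_def] using this
  obtain ⟨n, hn⟩ := (htend.eventually (gt_mem_nhds hε)).exists
  refine ⟨1/(n+1), by positivity, ?_⟩
  intro x hx
  rw [Real.dist_eq] at hx ⊢
  set δ : ℝ := 1/(n+1) with hδ
  have hx1 : a - δ ≤ x := by rw [abs_sub_lt_iff] at hx; linarith [hx.2]
  have hx2 : x ≤ a + δ := by rw [abs_sub_lt_iff] at hx; linarith [hx.1]
  have hδ0 : (0:ℝ) < δ := by positivity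
  have key : SS μ (a - δ) - SS μ (a + δ) = (μ (Ioc (a - δ) (a + δ))).toReal := by
    have := SS_split (μ := μ) (show a - δ ≤ a + δ by linarith)
    linarith
  have b1 : SS μ (a + δ) ≤ SS μ x := SS_antitone hx2
  have b2 : SS μ x ≤ SS μ (a - δ) := SS_antitone hx1
  have b3 : SS μ (a + δ) ≤ SS μ a := SS_antitone (by linarith)
  have b4 : SS μ a ≤ SS μ (a - δ) := SS_antitone (by linarith)
  rw [abs_sub_lt_iff]
  constructor <;> linarith [hn]

lemma gg_bounds [IsProbabilityMeasure μ] (hint : Integrable id μ) {t1 t2 : ℝ} (h : t1 ≤ t2) :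
    0 ≤ gg μ t1 - gg μ t2 ∧ gg μ t1 - gg μ t2 ≤ t2 - t1 := by
  have hd := gg_diff hint h
  have h1 := I_nonneg (μ := μ) t1 t2
  have h2 := I_le hint (t1 := t1) (t2 := t2)
  have h3 := SS_split (μ := μ) h
  have h5 := SS_le_one (μ := μ) t1
  have h6 := SS_nonneg (μ := μ) t2
  have h7 : (0:ℝ) ≤ (μ (Ioc t1 t2)).toReal := ENNReal.toReal_nonneg
  constructor
  · nlinarith [mul_nonneg (sub_nonneg.2 h) h6]
  · have e2 : (t2-t1)*(μ (Ioc t1 t2)).toReal + (t2-t1)*SS μ t2 = (t2-t1)*SS μ t1 := by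
      rw [h3]; ring
    have e3 : (t2-t1)*SS μ t1 ≤ (t2-t1)*1 := mul_le_mul_of_nonneg_left h5 (by linarith)
    linarith

lemma continuous_gg [IsProbabilityMeasure μ] (hint : Integrable id μ) :
    Continuous (gg μ) := by
  rw [Metric.continuous_iff]
  intro b ε hε
  refine ⟨ε, hε, fun a hab => ?_⟩
  rw [Real.dist_eq] at hab ⊢
  rcases le_total a b with h | h
  · have := gg_bounds hint h
    rw [abs_sub_lt_iff]
    rw [abs_sub_lt_iff] at hab
    constructor <;> linarith [this.1, this.2, hab.1, hab.2]
  · have := gg_bounds hint h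
    rw [abs_sub_lt_iff]
    rw [abs_sub_lt_iff] at hab
    constructor <;> linarith [this.1, this.2, hab.1, hab.2]

lemma Ioi_ne_zero_of_lt_essSup [IsProbabilityMeasure μ] {t : ℝ}
    (h : (t : EReal) < essSup (fun x : ℝ => (x : EReal)) μ) : μ (Ioi t) ≠ 0 := by
  intro h0
  have hae : ∀ᵐ x ∂μ, (fun x : ℝ => (x : EReal)) x ≤ (t : EReal) := by
    have hnm : ∀ᵐ x ∂μ, x ∉ Ioi t := (measure_eq_zero_iff_ae_notMem (μ := μ)).1 h0
    filter_upwards [hnm] with x hx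
    exact EReal.coe_le_coe_iff.2 (not_lt.1 hx)
  exact absurd (essSup_le_of_ae_le _ hae) (not_le.2 h)

lemma ae_le_of_essSup_eq [IsProbabilityMeasure μ] {b : ℝ}
    (h : essSup (fun x : ℝ => (x : EReal)) μ = (b : EReal)) : ∀ᵐ x ∂μ, x ≤ b := by
  have := ae_le_essSup (μ := μ) (f := fun x : ℝ => (x : EReal))
  rw [h] at this
  filter_upwards [this] with x hx
  exact EReal.coe_le_coe_iff.1 hx

lemma gg_le_mul [IsProbabilityMeasure μ] (hint : Integrable id μ) {b t : ℝ}
    (hb : ∀ᵐ x ∂μ, x ≤ b) :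
    gg μ t ≤ (b - t) * SS μ t := by
  have hle : gg μ t ≤ ∫ x, (Ioi t).indicator (fun _ => b - t) x ∂μ := by
    apply integral_mono_ae (integrable_max hint t)
      ((integrable_const (b - t)).indicator measurableSet_Ioi)
    filter_upwards [hb] with x hx
    by_cases h : t < x
    · rw [indicator_of_mem (by simpa [mem_Ioi] using h)]
      exact max_le (by linarith) (by linarith)
    · rw [indicator_of_notMem (by simpa [mem_Ioi] using h)]
      exact max_le (by push_neg at h; linarith) le_rfl
  rwa [integral_indicator measurableSet_Ioi, setIntegral_const, smul_eq_mul, mul_comm] at hle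

lemma gg_pos [IsProbabilityMeasure μ] (hint : Integrable id μ) {t : ℝ}
    (h : μ (Ioi t) ≠ 0) : 0 < gg μ t := by
  rw [gg, integral_pos_iff_support_of_nonneg (f := fun x => max (x - t) 0)
    (fun x => le_max_right (x - t) 0) (integrable_max hint t)]
  refine lt_of_lt_of_le (pos_iff_ne_zero.2 h) (measure_mono ?_)
  intro x hx
  simp only [mem_Ioi] at hx
  simp only [Function.mem_support]
  intro h0
  have : x - t ≤ 0 := by
    by_contra hc
    push_neg at hc
    rw [max_eq_left hc.le] at h0
    linarith
  linarith

lemma gg_eq_zero [IsProbabilityMeasure μ] (hint : Integrable id μ) {t : ℝ}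
    (h : μ (Ioi t) = 0) : gg μ t = 0 := by
  rw [gg]
  rw [integral_eq_zero_iff_of_nonneg (f := fun x => max (x - t) 0)
    (fun x => le_max_right (x - t) 0) (integrable_max hint t)]
  have hnm : ∀ᵐ x ∂μ, x ∉ Ioi t := (measure_eq_zero_iff_ae_notMem (μ := μ)).1 h
  filter_upwards [hnm] with x hx
  simp only [mem_Ioi, not_lt] at hx
  simp [Pi.zero_apply, max_eq_right (by linarith : x - t ≤ 0)]

lemma SS_zero [IsProbabilityMeasure μ] (hnonneg : μ (Iio 0) = 0) (h0 : μ ({0} : Set ℝ) = 0) :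
    SS μ 0 = 1 := by
  have hIic : μ (Iic 0) = 0 := by
    rw [← Iio_union_right]
    exact le_antisymm (le_trans (measure_union_le _ _) (by rw [hnonneg, h0]; simp)) zero_le
  have h1 : μ (Ioi (0:ℝ)) = 1 := by
    have h2 := measure_compl (measurableSet_Iic (a := (0:ℝ))) (measure_ne_top μ _)
    rw [compl_Iic] at h2
    rw [h2, hIic, measure_univ]
    simp
  rw [SS, h1]
  simp

lemma gg_eq_mrl_mul {t : ℝ} (h : SS μ t ≠ 0) : gg μ t = mrl μ t * SS μ t := by
  rw [mrl_eq, div_mul_cancel₀ _ h]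


lemma alg_lt (r r0 S1 S2 η I g1 g2 : ℝ)
    (hr : 0 ≤ r) (hlt : r < r0) (hS2 : 0 < S2) (hη : 0 ≤ η)
    (hsplit : S1 = η + S2)
    (hI0 : 0 ≤ I) (hIle : I ≤ (r0 - r) * η) (hIstrict : 0 < η → I < (r0 - r) * η)
    (hdiff : g1 - g2 = I + (r0 - r) * S2)
    (hg2 : g2 = r0 * S2) (hg1 : r0 * S1 ≤ g1) :
    r * g1 < r0 * g2 := by
  subst hsplit hg2
  by_cases hη0 : η = 0
  · subst hη0
    have hI00 : I = 0 := le_antisymm (by linarith) hI0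
    nlinarith [mul_pos (pow_pos (show (0:ℝ) < r0 - r by linarith) 2) hS2]
  · have hηpos : 0 < η := lt_of_le_of_ne hη (Ne.symm hη0)
    have hIlt := hIstrict hηpos
    have hIlow : r0 * η - (r0 - r) * S2 ≤ I := by nlinarith
    have hrη : r * η < (r0 - r) * S2 := by nlinarith
    have hrI : r * I < (r0 - r)^2 * S2 := by
      rcases eq_or_lt_of_le hr with h0 | hrpos
      · have hr0' : r = 0 := h0.symm
        subst hr0'
        nlinarith [mul_pos (pow_pos (show (0:ℝ) < r0 - 0 by linarith) 2) hS2]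
      · nlinarith [mul_lt_mul_of_pos_left hIlt hrpos,
          mul_lt_mul_of_pos_left hrη (show (0:ℝ) < r0 - r by linarith)]
    nlinarith

lemma alg_gt (r r0 S1 S2 η I g1 g2 : ℝ)
    (hr0 : 0 < r0) (hgt : r0 < r) (hS1 : 0 < S1) (hS2 : 0 ≤ S2) (hη : 0 ≤ η)
    (hsplit : S1 = η + S2)
    (hI0 : 0 ≤ I) (hIle : I ≤ (r - r0) * η) (hIstrict : 0 < η → 0 < I)
    (hdiff : g1 - g2 = I + (r - r0) * S2)
    (hg1 : g1 = r0 * S1) (hg2 : 0 < S2 → g2 ≤ r0 * S2) (hg2z : S2 = 0 → g2 = 0) :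
    r * g2 < r0 * g1 := by
  subst hsplit hg1
  rcases eq_or_lt_of_le hS2 with hz | hS2pos
  · rw [hg2z hz.symm]
    nlinarith [mul_pos hr0 (mul_pos hr0 (show (0:ℝ) < η + S2 by linarith))]
  · have hg2' := hg2 hS2pos
    have hIlow : r0 * η - (r - r0) * S2 ≤ I := by nlinarith
    by_cases hη0 : η = 0
    · subst hη0
      have hI00 : I = 0 := le_antisymm (by linarith) hI0
      nlinarith [mul_pos (pow_pos (show (0:ℝ) < r - r0 by linarith) 2) hS2pos]
    · have hηpos : 0 < η := lt_of_le_of_ne hη (Ne.symm hη0)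
      have hIpos := hIstrict hηpos
      by_cases hc : r0 * η ≤ (r - r0) * S2
      · have hh := mul_le_mul_of_nonneg_left hc (show (0:ℝ) ≤ r - r0 by linarith)
        nlinarith [mul_pos (show (0:ℝ) < r by linarith) hIpos]
      · push_neg at hc
        have hp1 := mul_pos hr0 (show (0:ℝ) < r0 * η - (r - r0) * S2 by linarith)
        have hp2 := mul_le_mul_of_nonneg_left hIlow (show (0:ℝ) ≤ r by linarith)
        nlinarith

end Stmt10

open Stmt10 in
/-- If `α` is DMRL (its mean residual lifetime is non-increasing), then the
fixed point equation `r = m(k + r)` has a unique solution `r*` in `(0, r_H)`, and `r*` is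
the unique global maximizer over `[0,∞)` of `U(r) = (2/3)·r·E[(α − k − r)⁺]`. -/
theorem stmt10 (μ : Measure ℝ) [IsProbabilityMeasure μ]
    (hnonneg : μ (Iio 0) = 0) (hint : Integrable id μ) (hcont : ∀ t : ℝ, μ {t} = 0)
    (hdmrl : Antitone (mrl μ))
    (T c : ℝ) (hT : 0 ≤ T) (hc : 0 ≤ c) (k : ℝ) (hk : k = 3*T + c)
    (rH : EReal) (hrH : rH = essSup (fun x : ℝ => (x : EReal)) μ - (k : EReal))
    (hrHpos : 0 < rH)
    (U : ℝ → ℝ) (hU : ∀ r : ℝ, U r = (2/3) * r * ∫ x, max (x - k - r) 0 ∂μ) :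
    ∃ rstar : ℝ, (0 < rstar ∧ (rstar : EReal) < rH) ∧ rstar = mrl μ (k + rstar) ∧
      (∀ r : ℝ, 0 < r → (r : EReal) < rH → r = mrl μ (k + r) → r = rstar) ∧
      (∀ r : ℝ, 0 ≤ r → r ≠ rstar → U r < U rstar) := by
  haveI : NullSingletonClass μ := ⟨hcont⟩
  have hk0 : 0 ≤ k := by rw [hk]; linarith
  set A := essSup (fun x : ℝ => (x : EReal)) μ with hA
  have hU' : ∀ r : ℝ, U r = 2/3 * r * gg μ (k + r) := by
    intro r
    rw [hU r]
    have he : (fun x : ℝ => max (x - k - r) 0) = fun x => max (x - (k + r)) 0 := by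
      ext x; rw [sub_sub]
    rw [gg, ← he]
  have hkA : (k : EReal) < A := by
    have h2 : (0 : EReal) < A - (k : EReal) := by rw [hrH] at hrHpos; exact hrHpos
    have h3 := (EReal.lt_sub_iff_add_lt (Or.inl (EReal.coe_ne_bot k))
      (Or.inl (EReal.coe_ne_top k))).1 h2
    simpa using h3
  have hcase : A = ⊤ ∨ ∃ a : ℝ, A = (a : EReal) ∧ k < a := by
    by_cases hT' : A = ⊤
    · exact Or.inl hT'
    · have hB : A ≠ ⊥ := by
        intro hbot
        rw [hbot] at hkA
        exact absurd hkA (by simp)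
      right
      refine ⟨A.toReal, (EReal.coe_toReal hT' hB).symm, ?_⟩
      have h4 := hkA
      rw [← EReal.coe_toReal hT' hB] at h4
      exact_mod_cast h4
  have hSk : μ (Ioi k) ≠ 0 := Ioi_ne_zero_of_lt_essSup hkA
  -- choose b with positive slack
  obtain ⟨b, hb0, hSb, hχb⟩ : ∃ b : ℝ, 0 < b ∧ μ (Ioi (k + b)) ≠ 0 ∧
      gg μ (k + b) < b * SS μ (k + b) := by
    rcases hcase with hTop | ⟨a, ha, hka⟩
    · refine ⟨max (gg μ 0) 0 + 1, by positivity, ?_, ?_⟩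
      · apply Ioi_ne_zero_of_lt_essSup
        rw [← hA, hTop]
        exact EReal.coe_lt_top _
      · have hSbne : μ (Ioi (k + (max (gg μ 0) 0 + 1))) ≠ 0 := by
          apply Ioi_ne_zero_of_lt_essSup
          rw [← hA, hTop]
          exact EReal.coe_lt_top _
        have hSpos := SS_pos hSbne
        have hmrlle : mrl μ (k + (max (gg μ 0) 0 + 1)) ≤ mrl μ 0 := by
          apply hdmrl
          have := le_max_right (gg μ 0) 0
          linarith
        have hmrl0 : mrl μ 0 = gg μ 0 := by
          rw [mrl_eq, SS_zero hnonneg (hcont 0), div_one]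
        have hlt : mrl μ (k + (max (gg μ 0) 0 + 1)) < max (gg μ 0) 0 + 1 := by
          rw [hmrl0] at hmrlle
          linarith [le_max_left (gg μ 0) 0]
        calc gg μ (k + (max (gg μ 0) 0 + 1))
            = mrl μ (k + (max (gg μ 0) 0 + 1)) * SS μ (k + (max (gg μ 0) 0 + 1)) :=
              gg_eq_mrl_mul (ne_of_gt hSpos)
          _ < (max (gg μ 0) 0 + 1) * SS μ (k + (max (gg μ 0) 0 + 1)) :=
              mul_lt_mul_of_pos_right hlt hSpos
    · have hak : 0 < a - k := by linarith
      refine ⟨3/4 * (a - k), by linarith, ?_, ?_⟩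
      · apply Ioi_ne_zero_of_lt_essSup
        rw [← hA, ha]
        exact_mod_cast (by linarith : k + 3/4 * (a - k) < a)
      · have hSbne : μ (Ioi (k + 3/4 * (a - k))) ≠ 0 := by
          apply Ioi_ne_zero_of_lt_essSup
          rw [← hA, ha]
          exact_mod_cast (by linarith : k + 3/4 * (a - k) < a)
        have hSpos := SS_pos hSbne
        have hae : ∀ᵐ x ∂μ, x ≤ a := ae_le_of_essSup_eq (by rw [← hA]; exact ha)
        have hle := gg_le_mul hint hae (t := k + 3/4 * (a - k))
        calc gg μ (k + 3/4 * (a - k)) ≤ (a - (k + 3/4 * (a - k))) * SS μ (k + 3/4 * (a - k)) :=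
              hle
          _ < 3/4 * (a - k) * SS μ (k + 3/4 * (a - k)) := by
              apply mul_lt_mul_of_pos_right _ hSpos
              linarith
  -- intermediate value theorem
  set χ : ℝ → ℝ := fun r => r * SS μ (k + r) - gg μ (k + r) with hχdef
  have hχcont : Continuous χ := by
    have hS : Continuous (SS μ) := continuous_SS hcont
    have hg : Continuous (gg μ) := continuous_gg hint
    exact (continuous_id.mul (hS.comp (continuous_const.add continuous_id))).sub
      (hg.comp (continuous_const.add continuous_id))
  have hχ0 : χ 0 < 0 := by
    have h1 : χ 0 = 0 * SS μ (k + 0) - gg μ (k + 0) := rfl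
    have h2 : 0 < gg μ k := gg_pos hint hSk
    rw [h1, add_zero]
    linarith
  have hχbpos : 0 < χ b := by
    have h1 : χ b = b * SS μ (k + b) - gg μ (k + b) := rfl
    rw [h1]
    linarith
  obtain ⟨r0, hr0mem, hr0⟩ := intermediate_value_Icc hb0.le hχcont.continuousOn
    (show (0:ℝ) ∈ Icc (χ 0) (χ b) from ⟨hχ0.le, hχbpos.le⟩)
  have hr0b : r0 ≤ b := hr0mem.2
  have hSr0 : μ (Ioi (k + r0)) ≠ 0 := by
    intro h0
    have h1 : SS μ (k + b) ≤ SS μ (k + r0) := SS_antitone (by linarith)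
    have h2 : SS μ (k + r0) = 0 := by rw [SS, h0]; simp
    have h3 := SS_pos hSb
    linarith
  have hSSr0 : 0 < SS μ (k + r0) := SS_pos hSr0
  have hgfix : gg μ (k + r0) = r0 * SS μ (k + r0) := by
    have h1 : χ r0 = r0 * SS μ (k + r0) - gg μ (k + r0) := rfl
    rw [hr0] at h1
    linarith
  have hr0pos : 0 < r0 := by
    rcases hr0mem.1.lt_or_eq with h | h
    · exact h
    · exfalso
      rw [← h] at hr0
      linarith
  have hfix : r0 = mrl μ (k + r0) := by
    rw [mrl_eq, hgfix, mul_div_assoc, div_self hSSr0.ne', mul_one]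
  have hrHr0 : (r0 : EReal) < rH := by
    rcases hcase with hTop | ⟨a, ha, hka⟩
    · rw [hrH, hTop, EReal.top_sub_coe]
      exact EReal.coe_lt_top r0
    · have hae : ∀ᵐ x ∂μ, x ≤ a := ae_le_of_essSup_eq (by rw [← hA]; exact ha)
      have hk_r0_le_a : k + r0 ≤ a := by
        by_contra hgt
        push_neg at hgt
        apply hSr0
        refine measure_mono_null ?_ ((ae_iff (μ := μ) (p := fun x => x ≤ a)).1 hae)
        intro x hx
        simp only [mem_Ioi] at hx
        simp only [mem_setOf_eq, not_le]
        linarith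
      have hggle := gg_le_mul hint hae (t := k + r0)
      rw [hgfix] at hggle
      have h5 : r0 ≤ a - (k + r0) :=
        le_of_mul_le_mul_right (by linarith [hggle]) hSSr0
      have hlt : r0 < a - k := by linarith
      rw [hrH, ha, ← EReal.coe_sub]
      exact_mod_cast hlt
  have huniq : ∀ r : ℝ, 0 < r → (r : EReal) < rH → r = mrl μ (k + r) → r = r0 := by
    intro r hr _ hfr
    by_contra hne
    rcases lt_or_gt_of_ne hne with hlt | hgt
    · have h1 := hdmrl (show k + r ≤ k + r0 by linarith)
      rw [← hfix, ← hfr] at h1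
      linarith
    · have h1 := hdmrl (show k + r0 ≤ k + r by linarith)
      rw [← hfix, ← hfr] at h1
      linarith
  have hmax : ∀ r : ℝ, 0 ≤ r → r ≠ r0 → U r < U r0 := by
    intro r hr hne
    suffices h : r * gg μ (k + r) < r0 * gg μ (k + r0) by
      rw [hU' r, hU' r0, mul_assoc, mul_assoc]
      exact mul_lt_mul_of_pos_left h (by norm_num)
    rcases lt_or_gt_of_ne hne with hlt | hgt
    · -- case r < r0
      have ht12 : k + r ≤ k + r0 := by linarith
      have hS1 : 0 < SS μ (k + r) := lt_of_lt_of_le hSSr0 (SS_antitone ht12)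
      apply alg_lt r r0 (SS μ (k + r)) (SS μ (k + r0)) ((μ (Ioc (k + r) (k + r0))).toReal)
        (∫ x in Ioc (k + r) (k + r0), (x - (k + r)) ∂μ) (gg μ (k + r)) (gg μ (k + r0))
        hr hlt hSSr0 ENNReal.toReal_nonneg (SS_split ht12) (I_nonneg _ _)
      · have h1 := I_le (μ := μ) hint (t1 := k + r) (t2 := k + r0)
        rwa [show k + r0 - (k + r) = r0 - r by ring] at h1
      · intro hηpos
        have hne0 : μ (Ioc (k + r) (k + r0)) ≠ 0 := by
          intro h0; rw [h0] at hηpos; simp at hηpos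
        have h1 := I_lt (μ := μ) hint (t1 := k + r) (t2 := k + r0) hne0
        rwa [show k + r0 - (k + r) = r0 - r by ring] at h1
      · have h1 := gg_diff (μ := μ) hint ht12
        rwa [show k + r0 - (k + r) = r0 - r by ring] at h1
      · exact hgfix
      · have hmrl12 : mrl μ (k + r0) ≤ mrl μ (k + r) := hdmrl ht12
        rw [← hfix, mrl_eq] at hmrl12
        exact (le_div_iff₀ hS1).1 hmrl12
    · -- case r > r0
      have ht12 : k + r0 ≤ k + r := by linarith
      apply alg_gt r r0 (SS μ (k + r0)) (SS μ (k + r)) ((μ (Ioc (k + r0) (k + r))).toReal)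
        (∫ x in Ioc (k + r0) (k + r), (x - (k + r0)) ∂μ) (gg μ (k + r0)) (gg μ (k + r))
        hr0pos hgt hSSr0 (SS_nonneg _) ENNReal.toReal_nonneg (SS_split ht12) (I_nonneg _ _)
      · have h1 := I_le (μ := μ) hint (t1 := k + r0) (t2 := k + r)
        rwa [show k + r - (k + r0) = r - r0 by ring] at h1
      · intro hηpos
        have hne0 : μ (Ioc (k + r0) (k + r)) ≠ 0 := by
          intro h0; rw [h0] at hηpos; simp at hηpos
        exact I_pos hint hne0
      · have h1 := gg_diff (μ := μ) hint ht12
        rwa [show k + r - (k + r0) = r - r0 by ring] at h1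
      · exact hgfix
      · intro hS2pos
        have hne0 : μ (Ioi (k + r)) ≠ 0 := by
          intro h0
          rw [SS, h0] at hS2pos
          simp at hS2pos
        have hmrl12 : mrl μ (k + r) ≤ mrl μ (k + r0) := hdmrl ht12
        rw [← hfix, mrl_eq] at hmrl12
        have hS2pos' : 0 < SS μ (k + r) := hS2pos
        exact (div_le_iff₀ hS2pos').1 hmrl12
      · intro hS2z
        apply gg_eq_zero hint
        have := (ENNReal.toReal_eq_zero_iff (μ (Ioi (k + r)))).1 hS2z
        rcases this with h | h
        · exact h
        · exact absurd h (measure_ne_top μ _)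
  exact ⟨r0, ⟨hr0pos, hrHr0⟩, hfix, huniq, hmax⟩
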